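/- The polynomial Γ = ∏_{k∈Q̄} γ_k is SL_2(F_q)-invariant: σ_c(Γ) = Γ for all c ∈ F_q and τ(Γ) = Γ. -/

import Mathlib

open MvPolynomial
open scoped Classical

noncomputable def σP (F : Type*) [Field F] (c : F) :
    MvPolynomial (Fin 3) F →ₐ[F] MvPolynomial (Fin 3) F :=
  aeval ![X 0, X 1 + C c * X 0, X 2 + C (2 * c) * X 1 + C (c ^ 2) * X 0]

noncomputable def τA (F : Type*) [Field F] :
    MvPolynomial (Fin 3) F →ₐ[F] MvPolynomial (Fin 3) F :=
  aeval ![X 2, -X 1, X 0]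

section Aux

lemma sigma_factor (F : Type*) [Field F] (a b k : F) :
    σP F a (X 2 + C (2*b) * X 1 + C (b^2 - k) * X 0)
      = X 2 + C (2*(b+a)) * X 1 + C ((b+a)^2 - k) * X 0 := by
  simp only [σP, map_add, map_mul, aeval_X, aeval_C, algebraMap_eq,
    Matrix.cons_val_zero, Matrix.cons_val_one, Matrix.head_cons, Matrix.cons_val_two,
    Matrix.tail_cons]
  simp only [map_add, map_mul, map_sub, map_pow, map_ofNat]
  ring

lemma tau_factor (F : Type*) [Field F] (A B T : F) (h : (A^2 - B) * T = 1) :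
    τA F (X 2 + C (2*A) * X 1 + C (A^2 - B) * X 0)
      = C (A^2 - B) * (X 2 + C (2 * -(A*T)) * X 1 + C ((-(A*T))^2 - B*T^2) * X 0) := by
  have hC : ((C A : MvPolynomial (Fin 3) F) ^ 2 - C B) * C T = 1 := by
    rw [← map_pow, ← map_sub, ← map_mul, h, map_one]
  simp only [τA, map_add, map_mul, aeval_X, aeval_C, algebraMap_eq,
    Matrix.cons_val_zero, Matrix.cons_val_one, Matrix.head_cons, Matrix.cons_val_two,
    Matrix.tail_cons]
  simp only [map_add, map_mul, map_sub, map_pow, map_ofNat, map_neg, map_one]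
  linear_combination (2 * C A * X 1 - X 0 * ((C A ^ 2 - C B) * C T + 1)) * hC

variable {Fq : Type*} [Field Fq] [Fintype Fq]

lemma prod_neg_Q : ∏ k ∈ Finset.univ.filter (fun k : Fq => k ≠ 0 ∧ ¬ IsSquare k),
    ((0:Fq)^2 - k) = 1 := by
  apply Finset.prod_involution (fun k _ => k⁻¹)
  · intro a ha
    obtain ⟨-, ha0, -⟩ := Finset.mem_filter.mp ha
    field_simp
    ring
  · intro a ha h1
    obtain ⟨-, ha0, hsq⟩ := Finset.mem_filter.mp ha
    intro heq
    have h2 : a * a = 1 := by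
      rw [← mul_inv_cancel₀ ha0, heq]
    rcases mul_self_eq_one_iff.mp h2 with h | h
    · exact hsq (h ▸ IsSquare.one)
    · apply h1; rw [h]; ring
  · intro a ha
    exact inv_inv a
  · intro a ha
    obtain ⟨-, ha0, hsq⟩ := Finset.mem_filter.mp ha
    refine Finset.mem_filter.mpr ⟨Finset.mem_univ _, inv_ne_zero ha0, ?_⟩
    rintro ⟨r, hr⟩
    have hr' : a⁻¹ = r * r := hr
    exact hsq ⟨r⁻¹, by rw [← inv_inv a, hr', mul_inv]⟩

lemma prod_sq_erase : ∏ c ∈ (Finset.univ.erase (0:Fq)), c^2 = 1 := by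
  apply Finset.prod_involution (fun c _ => c⁻¹)
  · intro a ha
    have ha0 : a ≠ 0 := (Finset.mem_erase.mp ha).1
    field_simp
  · intro a ha h1
    have ha0 : a ≠ 0 := (Finset.mem_erase.mp ha).1
    intro heq
    apply h1
    rw [pow_two]
    nth_rewrite 1 [← heq]
    exact inv_mul_cancel₀ ha0
  · intro a ha
    exact inv_inv a
  · intro a ha
    have ha0 : a ≠ 0 := (Finset.mem_erase.mp ha).1
    exact Finset.mem_erase.mpr ⟨inv_ne_zero ha0, Finset.mem_univ _⟩

lemma scalar_one :
    ∏ x ∈ (Finset.univ.filter (fun k : Fq => k ≠ 0 ∧ ¬ IsSquare k)) ×ˢ Finset.univ,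
      (x.2^2 - x.1) = 1 := by
  set Q := Finset.univ.filter (fun k : Fq => k ≠ 0 ∧ ¬ IsSquare k) with hQ
  have h1 : ∏ x ∈ Q ×ˢ Finset.univ, (x.2^2 - x.1)
      = ∏ k ∈ Q, ∏ c : Fq, (c^2 - k) := Finset.prod_product _ _ _
  rw [h1, Finset.prod_comm, ← Finset.mul_prod_erase Finset.univ _ (Finset.mem_univ (0:Fq)),
    prod_neg_Q, one_mul]
  have hB : ∀ c ∈ Finset.univ.erase (0:Fq),
      ∏ k ∈ Q, (c^2 - k) = (c^2)^Q.card * ∏ k ∈ Q, (1-k) := by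
    intro c hc
    have hc0 : c ≠ 0 := (Finset.mem_erase.mp hc).1
    have step : ∏ k ∈ Q, (c^2 - k) = ∏ k ∈ Q, (c^2 * (1-k)) := by
      refine Finset.prod_nbij' (fun k => k * (c⁻¹)^2) (fun k => k * c^2) ?_ ?_ ?_ ?_ ?_
      · intro a ha
        obtain ⟨-, ha0, hsq⟩ := Finset.mem_filter.mp ha
        refine Finset.mem_filter.mpr ⟨Finset.mem_univ _,
          mul_ne_zero ha0 (pow_ne_zero _ (inv_ne_zero hc0)), ?_⟩
        rintro ⟨r, hr⟩
        refine hsq ⟨r * c, ?_⟩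
        have hr' : a * (c⁻¹)^2 = r * r := hr
        have : a = a * (c⁻¹)^2 * c^2 := by field_simp
        rw [this, hr']; ring
      · intro a ha
        obtain ⟨-, ha0, hsq⟩ := Finset.mem_filter.mp ha
        refine Finset.mem_filter.mpr ⟨Finset.mem_univ _,
          mul_ne_zero ha0 (pow_ne_zero _ hc0), ?_⟩
        rintro ⟨r, hr⟩
        refine hsq ⟨r * c⁻¹, ?_⟩
        have hr' : a * c^2 = r * r := hr
        have : a = a * c^2 * (c⁻¹)^2 := by field_simp
        rw [this, hr']; ring
      · intro a _; field_simp
      · intro a _; field_simp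
      · intro a _; field_simp
    rw [step, Finset.prod_mul_distrib, Finset.prod_const]
  rw [Finset.prod_congr rfl hB, Finset.prod_mul_distrib, Finset.prod_const,
    Finset.prod_pow, prod_sq_erase, one_pow, one_mul,
    Finset.card_erase_of_mem (Finset.mem_univ _), Finset.card_univ]
  apply FiniteField.pow_card_sub_one_eq_one
  apply Finset.prod_ne_zero_iff.mpr
  intro k hk
  obtain ⟨-, -, hsq⟩ := Finset.mem_filter.mp hk
  intro h0
  exact hsq (by rw [show k = 1 from by linear_combination -h0]; exact IsSquare.one)

end Aux

noncomputable def ιinv {Fq : Type*} [Field Fq] (x : Fq × Fq) : Fq × Fq :=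
  (x.1 * ((x.2^2 - x.1)⁻¹)^2, -(x.2 * (x.2^2 - x.1)⁻¹))

theorem Gamma_invariant (F : Type*) [Field F] (p n q : ℕ) (hp : p.Prime) (hp2 : p ≠ 2)
    [CharP F p] (hn : n ≠ 0) (hq : q = p ^ n)
    (Fq : Type*) [Field Fq] [Fintype Fq] [Algebra Fq F] (hcard : Fintype.card Fq = q)
    (Γ : MvPolynomial (Fin 3) F)
    (hΓ : Γ = ∏ k ∈ Finset.univ.filter (fun k : Fq => k ≠ 0 ∧ ¬ IsSquare k),
      ∏ c : Fq, (X 2 + C (2 * algebraMap Fq F c) * X 1 +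
        C ((algebraMap Fq F c) ^ 2 - algebraMap Fq F k) * X 0)) :
    (∀ c : Fq, σP F (algebraMap Fq F c) Γ = Γ) ∧ τA F Γ = Γ := by
  set e := algebraMap Fq F with he
  set Q := Finset.univ.filter (fun k : Fq => k ≠ 0 ∧ ¬ IsSquare k) with hQ
  constructor
  · -- σ-invariance
    intro d
    rw [hΓ, map_prod]
    refine Finset.prod_congr rfl ?_
    intro k _
    rw [map_prod]
    refine Finset.prod_nbij' (fun c => c + d) (fun c => c - d) (fun _ _ => Finset.mem_univ _)
      (fun _ _ => Finset.mem_univ _) (fun a _ => add_sub_cancel_right a d)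
      (fun a _ => sub_add_cancel a d) ?_
    intro c _
    have := sigma_factor F (e d) (e c) (e k)
    rw [this, map_add]
  · -- τ-invariance
    rw [hΓ]
    have hprod : Γ = ∏ x ∈ Q ×ˢ Finset.univ,
        (X 2 + C (2 * e x.2) * X 1 + C ((e x.2) ^ 2 - e x.1) * X 0) := by
      rw [hΓ, Finset.prod_product]
    rw [← hΓ, hprod, map_prod]
    -- facts about members of Q ×ˢ univ
    have hd : ∀ x : Fq × Fq, x ∈ Q ×ˢ Finset.univ → x.2^2 - x.1 ≠ 0 := by
      intro x hx
      obtain ⟨-, -, hsq⟩ := Finset.mem_filter.mp (Finset.mem_product.mp hx).1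
      intro h0
      exact hsq ⟨x.2, by rw [← sq]; linear_combination -h0⟩
    have key : ∀ x ∈ Q ×ˢ Finset.univ,
        τA F (X 2 + C (2 * e x.2) * X 1 + C ((e x.2) ^ 2 - e x.1) * X 0)
          = C (e (x.2^2 - x.1)) * (X 2 + C (2 * e (ιinv x).2) * X 1 +
              C ((e (ιinv x).2) ^ 2 - e (ιinv x).1) * X 0) := by
      intro x hx
      have hdx := hd x hx
      have hE : ((e x.2)^2 - e x.1) * e ((x.2^2 - x.1)⁻¹) = 1 := by
        rw [← map_pow, ← map_sub, ← map_mul, mul_inv_cancel₀ hdx, map_one]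
      have h2 : e (ιinv x).2 = -(e x.2 * e ((x.2^2 - x.1)⁻¹)) := by
        rw [ιinv, map_neg, map_mul]
      have h1 : e (ιinv x).1 = e x.1 * (e ((x.2^2 - x.1)⁻¹))^2 := by
        rw [ιinv, map_mul, map_pow]
      have h0 : e (x.2^2 - x.1) = (e x.2)^2 - e x.1 := by
        rw [map_sub, map_pow]
      rw [h0, h1, h2]
      exact tau_factor F (e x.2) (e x.1) (e ((x.2^2 - x.1)⁻¹)) hE
    rw [Finset.prod_congr rfl key, Finset.prod_mul_distrib, ← map_prod, ← map_prod,
      scalar_one, map_one, map_one, one_mul]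
    refine Finset.prod_nbij' ιinv ιinv ?_ ?_ ?_ ?_ (fun a _ => rfl)
    · -- ιinv maps into the set
      intro x hx
      have hdx := hd x hx
      obtain ⟨hk, -⟩ := Finset.mem_product.mp hx
      obtain ⟨-, hk0, hsq⟩ := Finset.mem_filter.mp hk
      refine Finset.mem_product.mpr ⟨?_, Finset.mem_univ _⟩
      refine Finset.mem_filter.mpr ⟨Finset.mem_univ _,
        mul_ne_zero hk0 (pow_ne_zero _ (inv_ne_zero hdx)), ?_⟩
      rintro ⟨r, hr⟩
      have hr' : x.1 * ((x.2^2 - x.1)⁻¹)^2 = r * r := hr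
      refine hsq ⟨r * (x.2^2 - x.1), ?_⟩
      have h5 : x.1 = x.1 * ((x.2^2 - x.1)⁻¹)^2 * (x.2^2 - x.1)^2 := by field_simp
      rw [hr'] at h5
      nth_rewrite 1 [h5]
      ring
    · intro x hx
      have hdx := hd x hx
      obtain ⟨hk, -⟩ := Finset.mem_product.mp hx
      obtain ⟨-, hk0, hsq⟩ := Finset.mem_filter.mp hk
      refine Finset.mem_product.mpr ⟨?_, Finset.mem_univ _⟩
      refine Finset.mem_filter.mpr ⟨Finset.mem_univ _,
        mul_ne_zero hk0 (pow_ne_zero _ (inv_ne_zero hdx)), ?_⟩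
      rintro ⟨r, hr⟩
      have hr' : x.1 * ((x.2^2 - x.1)⁻¹)^2 = r * r := hr
      refine hsq ⟨r * (x.2^2 - x.1), ?_⟩
      have h5 : x.1 = x.1 * ((x.2^2 - x.1)⁻¹)^2 * (x.2^2 - x.1)^2 := by field_simp
      rw [hr'] at h5
      nth_rewrite 1 [h5]
      ring
    · intro x hx
      have hdx := hd x hx
      have h2 : ((ιinv x).2)^2 - (ιinv x).1 = (x.2^2 - x.1)⁻¹ := by
        show (-(x.2 * (x.2^2 - x.1)⁻¹))^2 - x.1 * ((x.2^2 - x.1)⁻¹)^2 = (x.2^2 - x.1)⁻¹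
        field_simp
      show ((ιinv x).1 * ((((ιinv x).2)^2 - (ιinv x).1)⁻¹)^2,
        -((ιinv x).2 * (((ιinv x).2)^2 - (ιinv x).1)⁻¹)) = x
      rw [h2, inv_inv]
      show (x.1 * ((x.2^2 - x.1)⁻¹)^2 * (x.2^2 - x.1)^2,
        -(-(x.2 * (x.2^2 - x.1)⁻¹) * (x.2^2 - x.1))) = x
      have e1 : x.1 * ((x.2^2 - x.1)⁻¹)^2 * (x.2^2 - x.1)^2 = x.1 := by field_simp
      have e2 : -(-(x.2 * (x.2^2 - x.1)⁻¹) * (x.2^2 - x.1)) = x.2 := by field_simp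
      rw [e1, e2]
    · intro x hx
      have hdx := hd x hx
      have h2 : ((ιinv x).2)^2 - (ιinv x).1 = (x.2^2 - x.1)⁻¹ := by
        show (-(x.2 * (x.2^2 - x.1)⁻¹))^2 - x.1 * ((x.2^2 - x.1)⁻¹)^2 = (x.2^2 - x.1)⁻¹
        field_simp
      show ((ιinv x).1 * ((((ιinv x).2)^2 - (ιinv x).1)⁻¹)^2,
        -((ιinv x).2 * (((ιinv x).2)^2 - (ιinv x).1)⁻¹)) = x
      rw [h2, inv_inv]
      show (x.1 * ((x.2^2 - x.1)⁻¹)^2 * (x.2^2 - x.1)^2,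
        -(-(x.2 * (x.2^2 - x.1)⁻¹) * (x.2^2 - x.1))) = x
      have e1 : x.1 * ((x.2^2 - x.1)⁻¹)^2 * (x.2^2 - x.1)^2 = x.1 := by field_simp
      have e2 : -(-(x.2 * (x.2^2 - x.1)⁻¹) * (x.2^2 - x.1)) = x.2 := by field_simp
      rw [e1, e2]
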